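/- Let f, g ∈ R[t][∂;'] with deg_∂ f = m, deg_∂ g = n, deg_t f ≤ d, deg_t g ≤ d. If deg_∂ gcrd(f,g) ≥ 1, then there exists a nonzero w ∈ R[t]^{1×(m+n)} with wV(f,g) = 0 and deg_t w ≤ 2(m+n)d. -/

import Mathlib

open Polynomial

/-- Derivative d/dt on the field of real rational functions. -/
noncomputable def ratDeriv (q : RatFunc ℝ) : RatFunc ℝ :=
  (algebraMap (Polynomial ℝ) (RatFunc ℝ) (derivative q.num) *
      algebraMap (Polynomial ℝ) (RatFunc ℝ) q.denom -
    algebraMap (Polynomial ℝ) (RatFunc ℝ) q.num *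
      algebraMap (Polynomial ℝ) (RatFunc ℝ) (derivative q.denom)) /
    (algebraMap (Polynomial ℝ) (RatFunc ℝ) q.denom) ^ 2

/-- Left multiplication by ∂ in R(t)[∂;′]. -/
noncomputable def dMul (g : Polynomial (RatFunc ℝ)) : Polynomial (RatFunc ℝ) :=
  X * g + g.sum fun i a => C (ratDeriv a) * X ^ i

/-- The skew (Ore) multiplication in R(t)[∂;′]. -/
noncomputable def skewMul (f g : Polynomial (RatFunc ℝ)) : Polynomial (RatFunc ℝ) :=
  f.sum fun i a => C a * dMul^[i] g

/-- h divides f on the right in R(t)[∂;′]. -/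
def SkewRightDvd (h f : Polynomial (RatFunc ℝ)) : Prop := ∃ u, f = skewMul u h

/-- h is a greatest common right divisor of f and g. -/
def IsGCRD (f g h : Polynomial (RatFunc ℝ)) : Prop :=
  SkewRightDvd h f ∧ SkewRightDvd h g ∧
    ∀ h2, SkewRightDvd h2 f → SkewRightDvd h2 g → h2.degree ≤ h.degree

/-- Left multiplication by ∂ in R[t][∂;′]. -/
noncomputable def dMulP (g : Polynomial (Polynomial ℝ)) : Polynomial (Polynomial ℝ) :=
  X * g + g.sum fun i a => C (derivative a) * X ^ i

/-- The differential Sylvester matrix of f, g ∈ R[t][∂;′] over R[t]. -/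
noncomputable def sylvP (f g : Polynomial (Polynomial ℝ)) (m n : ℕ) :
    Matrix (Fin (m + n)) (Fin (m + n)) (Polynomial ℝ) :=
  Matrix.of fun i j =>
    if (i : ℕ) < n then (dMulP^[(i : ℕ)] f).coeff j
    else (dMulP^[(i : ℕ) - n] g).coeff j

/-- Embedding R[t][∂;′] into R(t)[∂;′]. -/
noncomputable def toRat (f : Polynomial (Polynomial ℝ)) : Polynomial (RatFunc ℝ) :=
  f.map (algebraMap (Polynomial ℝ) (RatFunc ℝ))

set_option synthInstance.maxHeartbeats 1000000
set_option maxHeartbeats 1000000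

local notation "φ" => algebraMap (Polynomial ℝ) (RatFunc ℝ)

lemma phi_inj : Function.Injective φ := IsFractionRing.injective _ _

lemma phi_ne_zero {p : Polynomial ℝ} (hp : p ≠ 0) : φ p ≠ 0 := by
  intro h; exact hp (phi_inj (by simpa using h))

lemma ratDeriv_div (p1 p2 : Polynomial ℝ) (h2 : p2 ≠ 0) :
    ratDeriv (φ p1 / φ p2) =
      (φ (derivative p1) * φ p2 - φ p1 * φ (derivative p2)) / (φ p2) ^ 2 := by
  set q : RatFunc ℝ := φ p1 / φ p2 with hq
  have hd : q.denom ≠ 0 := q.denom_ne_zero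
  have hrep : φ q.num / φ q.denom = φ p1 / φ p2 := by rw [RatFunc.num_div_denom q]
  have hcross : φ q.num * φ p2 = φ p1 * φ q.denom := by
    rw [div_eq_div_iff (phi_ne_zero hd) (phi_ne_zero h2)] at hrep
    exact hrep
  have hcrossP : q.num * p2 = p1 * q.denom := by
    apply phi_inj; push_cast [map_mul] at hcross ⊢; exact hcross
  have hder : derivative q.num * p2 + q.num * derivative p2
      = derivative p1 * q.denom + p1 * derivative q.denom := by
    have := congrArg derivative hcrossP
    simpa [derivative_mul] using this
  have key : (derivative q.num * q.denom - q.num * derivative q.denom) * p2 ^ 2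
      = (derivative p1 * p2 - p1 * derivative p2) * q.denom ^ 2 := by
    linear_combination (q.denom * p2) * hder -
      (derivative q.denom * p2 + derivative p2 * q.denom) * hcrossP
  rw [ratDeriv]
  rw [div_eq_div_iff (pow_ne_zero _ (phi_ne_zero hd)) (pow_ne_zero _ (phi_ne_zero h2))]
  simp only [← map_mul, ← map_sub, ← map_pow]
  exact congrArg _ key

lemma ratDeriv_algebraMap (p : Polynomial ℝ) : ratDeriv (φ p) = φ (derivative p) := by
  have := ratDeriv_div p 1 one_ne_zero
  simpa using this

lemma ratDeriv_zero : ratDeriv 0 = 0 := by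
  simpa using ratDeriv_algebraMap 0

lemma ratDeriv_add (a b : RatFunc ℝ) : ratDeriv (a + b) = ratDeriv a + ratDeriv b := by
  have key : ∀ (n1 d1 n2 d2 : Polynomial ℝ), d1 ≠ 0 → d2 ≠ 0 →
      ratDeriv (φ n1 / φ d1 + φ n2 / φ d2)
      = ratDeriv (φ n1 / φ d1) + ratDeriv (φ n2 / φ d2) := by
    intro n1 d1 n2 d2 h1 h2
    have habd : φ n1 / φ d1 + φ n2 / φ d2 = φ (n1 * d2 + n2 * d1) / φ (d1 * d2) := by
      field_simp [phi_ne_zero h1, phi_ne_zero h2]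
      simp only [map_add, map_mul]; ring
    rw [habd, ratDeriv_div _ _ (mul_ne_zero h1 h2), ratDeriv_div _ _ h1, ratDeriv_div _ _ h2]
    simp only [derivative_add, derivative_mul, map_add, map_mul]
    field_simp [phi_ne_zero h1, phi_ne_zero h2]
    ring
  have := key a.num a.denom b.num b.denom a.denom_ne_zero b.denom_ne_zero
  simpa [RatFunc.num_div_denom] using this

lemma ratDeriv_mul (a b : RatFunc ℝ) :
    ratDeriv (a * b) = ratDeriv a * b + a * ratDeriv b := by
  have key : ∀ (n1 d1 n2 d2 : Polynomial ℝ), d1 ≠ 0 → d2 ≠ 0 →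
      ratDeriv (φ n1 / φ d1 * (φ n2 / φ d2))
      = ratDeriv (φ n1 / φ d1) * (φ n2 / φ d2)
        + φ n1 / φ d1 * ratDeriv (φ n2 / φ d2) := by
    intro n1 d1 n2 d2 h1 h2
    have habd : φ n1 / φ d1 * (φ n2 / φ d2) = φ (n1 * n2) / φ (d1 * d2) := by
      field_simp
      rw [map_mul, map_mul]
    rw [habd, ratDeriv_div _ _ (mul_ne_zero h1 h2), ratDeriv_div _ _ h1, ratDeriv_div _ _ h2]
    simp only [derivative_mul, map_add, map_mul]
    field_simp [phi_ne_zero h1, phi_ne_zero h2]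
    ring
  have := key a.num a.denom b.num b.denom a.denom_ne_zero b.denom_ne_zero
  simpa [RatFunc.num_div_denom] using this

/-- coefficientwise ratDeriv, as the `sum` appearing in `dMul`. -/
noncomputable def Phi (g : Polynomial (RatFunc ℝ)) : Polynomial (RatFunc ℝ) :=
  g.sum fun i a => C (ratDeriv a) * X ^ i

noncomputable def PhiP (g : Polynomial (Polynomial ℝ)) : Polynomial (Polynomial ℝ) :=
  g.sum fun i a => C (derivative a) * X ^ i

lemma coeff_Phi (g : Polynomial (RatFunc ℝ)) (j : ℕ) :
    (Phi g).coeff j = ratDeriv (g.coeff j) := by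
  rw [Phi, Polynomial.sum, finset_sum_coeff]
  simp only [coeff_C_mul, coeff_X_pow, mul_ite, mul_one, mul_zero]
  rw [Finset.sum_ite_eq g.support j (fun _ => ratDeriv (g.coeff _))]
  by_cases h : j ∈ g.support
  · simp [h]
  · simp only [h, if_false]
    rw [Polynomial.notMem_support_iff.mp h, ratDeriv_zero]

lemma coeff_PhiP (g : Polynomial (Polynomial ℝ)) (j : ℕ) :
    (PhiP g).coeff j = derivative (g.coeff j) := by
  rw [PhiP, Polynomial.sum, finset_sum_coeff]
  simp only [coeff_C_mul, coeff_X_pow, mul_ite, mul_one, mul_zero]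
  rw [Finset.sum_ite_eq g.support j (fun _ => derivative (g.coeff _))]
  by_cases h : j ∈ g.support
  · simp [h]
  · simp only [h, if_false]
    rw [Polynomial.notMem_support_iff.mp h, derivative_zero]

lemma dMul_def (g : Polynomial (RatFunc ℝ)) : dMul g = X * g + Phi g := rfl
lemma dMulP_def (g : Polynomial (Polynomial ℝ)) : dMulP g = X * g + PhiP g := rfl

lemma Phi_add (p q : Polynomial (RatFunc ℝ)) : Phi (p + q) = Phi p + Phi q := by
  ext j; simp [coeff_Phi, ratDeriv_add]

lemma Phi_C_mul (a : RatFunc ℝ) (p : Polynomial (RatFunc ℝ)) :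
    Phi (C a * p) = C (ratDeriv a) * p + C a * Phi p := by
  ext j; simp [coeff_Phi, ratDeriv_mul]

lemma dMul_add (p q : Polynomial (RatFunc ℝ)) : dMul (p + q) = dMul p + dMul q := by
  simp only [dMul_def, Phi_add]; ring

lemma dMul_C_mul (a : RatFunc ℝ) (p : Polynomial (RatFunc ℝ)) :
    dMul (C a * p) = C (ratDeriv a) * p + C a * dMul p := by
  simp only [dMul_def, Phi_C_mul]; ring

lemma coeff_toRat (f : Polynomial (Polynomial ℝ)) (j : ℕ) :
    (toRat f).coeff j = φ (f.coeff j) := by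
  simp [toRat, coeff_map]

lemma toRat_dMulP (f : Polynomial (Polynomial ℝ)) : toRat (dMulP f) = dMul (toRat f) := by
  ext j
  rw [coeff_toRat, dMulP_def, dMul_def, coeff_add, coeff_add, coeff_PhiP, coeff_Phi,
    map_add, coeff_toRat, ratDeriv_algebraMap]
  congr 1
  cases j with
  | zero => simp [mul_coeff_zero]
  | succ i => rw [coeff_X_mul, coeff_X_mul, coeff_toRat]

lemma toRat_dMulP_iter (f : Polynomial (Polynomial ℝ)) (i : ℕ) :
    toRat (dMulP^[i] f) = dMul^[i] (toRat f) := by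
  induction i with
  | zero => rfl
  | succ i ih => rw [Function.iterate_succ_apply', Function.iterate_succ_apply', toRat_dMulP, ih]

lemma degree_Phi_le (g : Polynomial (RatFunc ℝ)) : (Phi g).degree ≤ g.degree := by
  rw [Phi, Polynomial.sum]
  refine (degree_sum_le _ _).trans ?_
  rw [Finset.sup_le_iff]
  intro i hi
  refine (degree_mul_le _ _).trans ?_
  refine le_trans (add_le_add degree_C_le (degree_X_pow_le i)) ?_
  rw [zero_add]
  exact_mod_cast Polynomial.le_degree_of_mem_supp i hi

lemma degree_dMul_le (g : Polynomial (RatFunc ℝ)) : (dMul g).degree ≤ g.degree + 1 := by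
  rw [dMul_def]
  refine (degree_add_le _ _).trans (max_le ?_ ?_)
  · refine (degree_mul_le _ _).trans ?_
    rw [degree_X, add_comm]
  · calc (Phi g).degree ≤ g.degree := degree_Phi_le g
      _ ≤ g.degree + 1 := le_add_of_nonneg_right (by exact_mod_cast Nat.zero_le 1)

lemma degree_dMul (g : Polynomial (RatFunc ℝ)) (hg : g ≠ 0) :
    (dMul g).degree = g.degree + 1 ∧ (dMul g).leadingCoeff = g.leadingCoeff := by
  have hX : (X * g).degree = g.degree + 1 := by
    rw [degree_mul, degree_X]; ring
  have hXne : g.degree + 1 ≠ ⊥ := by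
    rw [degree_eq_natDegree hg]; exact_mod_cast WithBot.coe_ne_bot
  have hlt : (Phi g).degree < (X * g).degree := by
    rw [hX]
    refine lt_of_le_of_lt (degree_Phi_le g) ?_
    rw [degree_eq_natDegree hg]
    exact_mod_cast WithBot.coe_lt_coe.mpr (Nat.lt_succ_self _)
  constructor
  · rw [dMul_def, add_comm (X * g) (Phi g), degree_add_eq_right_of_degree_lt hlt, hX]
  · rw [dMul_def, add_comm (X * g) (Phi g), leadingCoeff_add_of_degree_lt hlt,
      leadingCoeff_mul, leadingCoeff_X, one_mul]

lemma degree_dMul_iter (g : Polynomial (RatFunc ℝ)) (hg : g ≠ 0) (i : ℕ) :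
    (dMul^[i] g).degree = g.degree + i ∧ (dMul^[i] g).leadingCoeff = g.leadingCoeff := by
  induction i with
  | zero => simp
  | succ i ih =>
    have hne : dMul^[i] g ≠ 0 := by
      intro h0
      rw [h0, degree_zero] at ih
      exact (by rw [degree_eq_natDegree hg]; exact_mod_cast WithBot.coe_ne_bot :
        g.degree + (i : ℕ) ≠ ⊥) ih.1.symm
    obtain ⟨h1, h2⟩ := degree_dMul _ hne
    rw [Function.iterate_succ_apply', h1, h2, ih.1, ih.2]
    constructor
    · push_cast; ring
    · rfl

lemma dMul_iter_ne_zero (g : Polynomial (RatFunc ℝ)) (hg : g ≠ 0) (i : ℕ) :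
    dMul^[i] g ≠ 0 := by
  intro h0
  have := (degree_dMul_iter g hg i).1
  rw [h0, degree_zero] at this
  rw [degree_eq_natDegree hg] at this
  exact (by exact_mod_cast WithBot.coe_ne_bot : ((g.natDegree : WithBot ℕ) + i) ≠ ⊥) this.symm

lemma skewMul_add_left (p q h : Polynomial (RatFunc ℝ)) :
    skewMul (p + q) h = skewMul p h + skewMul q h := by
  unfold skewMul
  apply Polynomial.sum_add_index <;> intros <;> simp [add_mul]

lemma skewMul_monomial (i : ℕ) (a : RatFunc ℝ) (h : Polynomial (RatFunc ℝ)) :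
    skewMul ((monomial i) a) h = C a * dMul^[i] h := by
  unfold skewMul
  rw [Polynomial.sum_monomial_index]
  simp

lemma skewMul_zero_left (h : Polynomial (RatFunc ℝ)) : skewMul 0 h = 0 := by
  unfold skewMul; exact Polynomial.sum_zero_index _

lemma dMul_skewMul (u h : Polynomial (RatFunc ℝ)) :
    dMul (skewMul u h) = skewMul (dMul u) h := by
  induction u using Polynomial.induction_on' with
  | add p q hp hq => rw [skewMul_add_left, dMul_add, hp, hq, dMul_add, skewMul_add_left]
  | monomial i a =>
    rw [skewMul_monomial, dMul_C_mul]
    have hmon : dMul ((monomial i) a) = (monomial (i+1)) a + (monomial i) (ratDeriv a) := by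
      rw [dMul_def]
      congr 1
      · rw [← C_mul_X_pow_eq_monomial, ← C_mul_X_pow_eq_monomial]; ring
      · rw [Phi, Polynomial.sum_monomial_index a _ (by simp [ratDeriv_zero]), C_mul_X_pow_eq_monomial]
    rw [hmon, skewMul_add_left, skewMul_monomial, skewMul_monomial,
      Function.iterate_succ_apply']
    ring
lemma rightDvd_dMul {h p : Polynomial (RatFunc ℝ)} (hp : SkewRightDvd h p) :
    SkewRightDvd h (dMul p) := by
  obtain ⟨u, rfl⟩ := hp
  exact ⟨dMul u, dMul_skewMul u h⟩

lemma rightDvd_dMul_iter {h p : Polynomial (RatFunc ℝ)} (hp : SkewRightDvd h p) (i : ℕ) :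
    SkewRightDvd h (dMul^[i] p) := by
  induction i with
  | zero => exact hp
  | succ i ih => rw [Function.iterate_succ_apply']; exact rightDvd_dMul ih

lemma degree_dMul_iter_le (g : Polynomial (RatFunc ℝ)) (i : ℕ) :
    (dMul^[i] g).degree ≤ g.degree + i := by
  induction i with
  | zero => simp
  | succ i ih =>
    rw [Function.iterate_succ_apply']
    refine (degree_dMul_le _).trans ?_
    calc (dMul^[i] g).degree + 1 ≤ g.degree + i + 1 := by
          exact add_le_add_left ih 1
      _ = g.degree + (i + 1 : ℕ) := by push_cast; ring

lemma skewMul_def (u h : Polynomial (RatFunc ℝ)) :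
    skewMul u h = ∑ i ∈ u.support, C (u.coeff i) * dMul^[i] h := rfl

lemma degree_skewMul_le (u h : Polynomial (RatFunc ℝ)) :
    (skewMul u h).degree ≤ u.degree + h.degree := by
  rw [skewMul_def]
  refine (degree_sum_le _ _).trans ?_
  rw [Finset.sup_le_iff]
  intro i hi
  refine (degree_mul_le _ _).trans ?_
  calc (C (u.coeff i)).degree + (dMul^[i] h).degree ≤ 0 + (h.degree + i) :=
        add_le_add degree_C_le (degree_dMul_iter_le h i)
    _ = h.degree + i := by rw [zero_add]
    _ ≤ u.degree + h.degree := by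
        rw [add_comm u.degree h.degree]
        exact add_le_add_right (by exact_mod_cast Polynomial.le_degree_of_mem_supp i hi) _

lemma coeff_skewMul_top (u h : Polynomial (RatFunc ℝ)) (hu : u ≠ 0) (hh : h ≠ 0) :
    (skewMul u h).coeff (u.natDegree + h.natDegree) = u.leadingCoeff * h.leadingCoeff := by
  rw [skewMul_def, finset_sum_coeff]
  rw [Finset.sum_eq_single u.natDegree]
  · rw [coeff_C_mul]
    have hdeg : (dMul^[u.natDegree] h).degree = h.degree + u.natDegree :=
      (degree_dMul_iter h hh u.natDegree).1
    have hnd : (dMul^[u.natDegree] h).natDegree = h.natDegree + u.natDegree := by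
      have := hdeg
      rw [degree_eq_natDegree hh] at this
      have h2 : (dMul^[u.natDegree] h).degree = ((h.natDegree + u.natDegree : ℕ) : WithBot ℕ) := by
        rw [this]; push_cast; ring
      exact natDegree_eq_of_degree_eq_some h2
    have hx := (degree_dMul_iter h hh u.natDegree).2
    have h3 : (dMul^[u.natDegree] h).coeff (u.natDegree + h.natDegree) = h.leadingCoeff := by
      rw [add_comm, ← hnd, coeff_natDegree]
      exact hx
    rw [h3]
    rfl
  · intro i hi hine
    have hile : i < u.natDegree := lt_of_le_of_ne (le_natDegree_of_mem_supp i hi) hine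
    rw [coeff_C_mul]
    have : (dMul^[i] h).degree < ((u.natDegree + h.natDegree : ℕ) : WithBot ℕ) := by
      rw [(degree_dMul_iter h hh i).1, degree_eq_natDegree hh]
      exact_mod_cast by omega
    rw [coeff_eq_zero_of_degree_lt this, mul_zero]
  · intro hnot
    rw [Polynomial.notMem_support_iff.mp hnot]
    simp

lemma degree_skewMul (u h : Polynomial (RatFunc ℝ)) (hu : u ≠ 0) (hh : h ≠ 0) :
    (skewMul u h).degree = ((u.natDegree + h.natDegree : ℕ) : WithBot ℕ) := by
  apply le_antisymm
  · refine (degree_skewMul_le u h).trans ?_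
    rw [degree_eq_natDegree hu, degree_eq_natDegree hh]
    push_cast; rfl
  · apply Polynomial.le_degree_of_ne_zero
    rw [coeff_skewMul_top u h hu hh]
    exact mul_ne_zero (leadingCoeff_ne_zero.mpr hu) (leadingCoeff_ne_zero.mpr hh)

lemma skewMul_ne_zero (u h : Polynomial (RatFunc ℝ)) (hu : u ≠ 0) (hh : h ≠ 0) :
    skewMul u h ≠ 0 := by
  intro h0
  have := degree_skewMul u h hu hh
  rw [h0, degree_zero] at this
  exact (by exact_mod_cast WithBot.coe_ne_bot :
    ((u.natDegree + h.natDegree : ℕ) : WithBot ℕ) ≠ ⊥) this.symm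

lemma natDegree_det_le {s : ℕ} (M : Matrix (Fin s) (Fin s) (Polynomial ℝ)) {d : ℕ}
    (hM : ∀ i j, (M i j).natDegree ≤ d) : M.det.natDegree ≤ s * d := by
  rw [Matrix.det_apply]
  refine Polynomial.natDegree_sum_le_of_forall_le _ _ ?_
  intro σ _
  have h1 : (Equiv.Perm.sign σ • ∏ i, M (σ i) i : Polynomial ℝ)
      = ((Equiv.Perm.sign σ : ℤ) : Polynomial ℝ) * ∏ i, M (σ i) i := by
    rw [Units.smul_def, zsmul_eq_mul]
  rw [h1]
  refine le_trans (natDegree_mul_le) ?_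
  rw [Polynomial.natDegree_intCast, zero_add]
  refine le_trans (Polynomial.natDegree_prod_le _ _) ?_
  calc ∑ i, (M (σ i) i).natDegree ≤ ∑ _i : Fin s, d := by
        exact Finset.sum_le_sum fun i _ => hM (σ i) i
    _ = s * d := by simp [Finset.sum_const, Finset.card_univ, mul_comm]

lemma vecMul_apply {s k : ℕ} (w : Fin s → Polynomial ℝ) (M : Matrix (Fin s) (Fin k) (Polynomial ℝ))
    (j : Fin k) : Matrix.vecMul w M j = ∑ i, w i * M i j := rfl

lemma dichotomy (d : ℕ) : ∀ (s : ℕ) {k : ℕ} (M : Matrix (Fin s) (Fin k) (Polynomial ℝ)),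
    (∀ i j, (M i j).natDegree ≤ d) →
    (∃ J : Fin s → Fin k, Function.Injective J ∧ (M.submatrix id J).det ≠ 0) ∨
    (∃ w : Fin s → Polynomial ℝ, w ≠ 0 ∧ Matrix.vecMul w M = 0 ∧
      ∀ i, (w i).natDegree ≤ s * d) := by
  intro s
  induction s with
  | zero =>
    intro k M _
    left
    refine ⟨Fin.elim0, fun a => a.elim0, ?_⟩
    rw [Matrix.det_fin_zero]
    exact one_ne_zero
  | succ s ih =>
    intro k M hM
    rcases ih (M.submatrix Fin.castSucc id) (fun i j => hM _ _) with
      ⟨J', hJinj, hJdet⟩ | ⟨w', hw0, hwM, hwd⟩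
    · -- first s rows have an invertible submatrix A = M.submatrix castSucc J'
      have hAeq : (M.submatrix Fin.castSucc id).submatrix id J' = M.submatrix Fin.castSucc J' := by
        rw [Matrix.submatrix_submatrix]
        rfl
      rw [hAeq] at hJdet
      set w : Fin (s+1) → Polynomial ℝ :=
        fun i => (-1)^((i:ℕ) + s) * (M.submatrix i.succAbove J').det with hw
      have key : ∀ j : Fin k,
          Matrix.vecMul w M j = (M.submatrix id (Fin.snoc J' j)).det := by
        intro j
        rw [Matrix.det_succ_column (M.submatrix id (Fin.snoc J' j)) (Fin.last s)]
        rw [vecMul_apply]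
        refine Finset.sum_congr rfl fun i _ => ?_
        have h1 : (M.submatrix id (Fin.snoc J' j)) i (Fin.last s) = M i j := by
          simp [Matrix.submatrix_apply]
        have h2 : (M.submatrix id (Fin.snoc J' j)).submatrix i.succAbove
            (Fin.last s).succAbove = M.submatrix i.succAbove J' := by
          ext a b
          simp [Matrix.submatrix_apply, Fin.succAbove_last, Fin.snoc_castSucc]
        rw [h1, h2, Fin.val_last, hw]
        ring
      by_cases hall : ∀ j : Fin k, (M.submatrix id (Fin.snoc J' j)).det = 0
      · right
        refine ⟨w, ?_, ?_, ?_⟩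
        · intro h0
          have hlast : w (Fin.last s) = 0 := congrFun h0 _
          rw [hw] at hlast
          simp only [Fin.val_last] at hlast
          have heven : ((-1 : Polynomial ℝ))^(s + s) = 1 :=
            Even.neg_one_pow ⟨s, rfl⟩
          rw [heven, one_mul] at hlast
          have hsubeq : M.submatrix (Fin.last s).succAbove J' = M.submatrix Fin.castSucc J' := by
            ext a b
            simp [Matrix.submatrix_apply, Fin.succAbove_last]
          rw [hsubeq] at hlast
          exact hJdet hlast
        · funext j
          rw [key j, hall j]
          rfl
        · intro i
          rw [hw]
          refine le_trans natDegree_mul_le ?_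
          have h1 : ((-1 : Polynomial ℝ)^((i:ℕ) + s)).natDegree = 0 := by
            rw [show (-1 : Polynomial ℝ) = C (-1) by simp, ← map_pow]
            exact natDegree_C _
          rw [h1, zero_add]
          refine le_trans (natDegree_det_le _ (fun a b => hM _ _)) ?_
          exact Nat.mul_le_mul_right d (Nat.le_succ s)
      · push_neg at hall
        obtain ⟨j, hj⟩ := hall
        left
        have hnotrange : ∀ t, J' t ≠ j := by
          intro t ht
          apply hj
          refine Matrix.det_zero_of_column_eq (i := Fin.castSucc t) (j := Fin.last s)
            (Fin.ne_of_lt (Fin.castSucc_lt_last t)) ?_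
          intro a
          simp [Matrix.submatrix_apply, ht]
        refine ⟨Fin.snoc J' j, ?_, hj⟩
        intro a b hab
        rcases Fin.eq_castSucc_or_eq_last a with ⟨a', rfl⟩ | rfl <;>
          rcases Fin.eq_castSucc_or_eq_last b with ⟨b', rfl⟩ | rfl
        · simp only [Fin.snoc_castSucc] at hab
          rw [hJinj hab]
        · simp only [Fin.snoc_castSucc, Fin.snoc_last] at hab
          exact absurd hab (hnotrange a')
        · simp only [Fin.snoc_castSucc, Fin.snoc_last] at hab
          exact absurd hab.symm (hnotrange b')
        · rfl
    · -- extend null vector by zero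
      right
      refine ⟨Fin.snoc w' 0, ?_, ?_, ?_⟩
      · intro h0
        apply hw0
        funext i
        have := congrFun h0 (Fin.castSucc i)
        simpa [Fin.snoc_castSucc] using this
      · funext j
        rw [vecMul_apply, Fin.sum_univ_castSucc]
        simp only [Fin.snoc_castSucc, Fin.snoc_last, zero_mul, add_zero]
        have := congrFun hwM j
        rw [vecMul_apply] at this
        simpa [Matrix.submatrix_apply] using this
      · intro i
        rcases Fin.eq_castSucc_or_eq_last i with ⟨i', rfl⟩ | rfl
        · rw [Fin.snoc_castSucc]
          exact le_trans (hwd i') (Nat.mul_le_mul_right d (Nat.le_succ s))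
        · rw [Fin.snoc_last]
          simp

noncomputable def CV (k : ℕ) : Polynomial (RatFunc ℝ) →ₗ[RatFunc ℝ] (Fin k → RatFunc ℝ) where
  toFun p := fun j => p.coeff (j : ℕ)
  map_add' p q := by funext j; simp
  map_smul' c p := by funext j; simp

lemma row_mem_span {k : ℕ} (h p : Polynomial (RatFunc ℝ)) (hh1 : 1 ≤ h.degree)
    (hp : SkewRightDvd h p) (hpne : p ≠ 0) (hpd : p.degree < (k : WithBot ℕ)) :
    CV k p ∈ Submodule.span (RatFunc ℝ)
      (Set.range (fun j : Fin (k-1) => CV k (dMul^[(j:ℕ)] h))) := by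
  obtain ⟨u, rfl⟩ := hp
  have hh0 : h ≠ 0 := by
    intro h0; rw [h0, degree_zero] at hh1; exact absurd hh1 (by simp)
  have hu0 : u ≠ 0 := by
    intro h0; rw [h0, skewMul_zero_left] at hpne; exact hpne rfl
  have hndh : 1 ≤ h.natDegree := by
    rw [degree_eq_natDegree hh0] at hh1
    exact_mod_cast hh1
  have hdeg := degree_skewMul u h hu0 hh0
  rw [hdeg] at hpd
  have hsum : u.natDegree + h.natDegree < k := by exact_mod_cast hpd
  have hult : u.natDegree < k - 1 := by omega
  have hrep : skewMul u h = ∑ i ∈ Finset.range (k-1), C (u.coeff i) * dMul^[i] h := by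
    unfold skewMul
    exact Polynomial.sum_over_range' u (fun n => by simp) (k-1) hult
  rw [hrep, map_sum]
  have : ∀ i ∈ Finset.range (k-1), CV k (C (u.coeff i) * dMul^[i] h)
      ∈ Submodule.span (RatFunc ℝ)
        (Set.range (fun j : Fin (k-1) => CV k (dMul^[(j:ℕ)] h))) := by
    intro i hi
    rw [← Polynomial.smul_eq_C_mul, map_smul]
    refine Submodule.smul_mem _ _ (Submodule.subset_span ?_)
    exact ⟨⟨i, Finset.mem_range.mp hi⟩, rfl⟩
  exact Submodule.sum_mem _ this

lemma rows_indep_of_det {k : ℕ} (N : Matrix (Fin k) (Fin k) (RatFunc ℝ)) (J : Fin k → Fin k)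
    (hdet : (N.submatrix id J).det ≠ 0) :
    LinearIndependent (RatFunc ℝ) (fun i => N i) := by
  rw [Fintype.linearIndependent_iff]
  intro c hc
  set S := N.submatrix id J with hS
  haveI : Invertible S := S.invertibleOfIsUnitDet (isUnit_iff_ne_zero.mpr hdet)
  have hv : Matrix.vecMul c S = 0 := by
    funext j
    have := congrFun hc (J j)
    simpa [hS, Matrix.vecMul, dotProduct, Finset.sum_apply, Matrix.submatrix_apply] using this
  have hc0 : c = 0 := by
    calc c = Matrix.vecMul c 1 := (Matrix.vecMul_one c).symm
      _ = Matrix.vecMul c (S * ⅟S) := by rw [mul_invOf_self]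
      _ = Matrix.vecMul (Matrix.vecMul c S) ⅟S := (Matrix.vecMul_vecMul c S ⅟S).symm
      _ = 0 := by rw [hv, Matrix.zero_vecMul]
  intro i; rw [hc0]; rfl

lemma not_indep {k k' : ℕ} (v : Fin k → (Fin k → RatFunc ℝ)) (fam : Fin k' → (Fin k → RatFunc ℝ))
    (hk : k' < k)
    (hmem : ∀ i, v i ∈ Submodule.span (RatFunc ℝ) (Set.range fam)) :
    ¬ LinearIndependent (RatFunc ℝ) v := by
  intro hind
  set W := Submodule.span (RatFunc ℝ) (Set.range fam) with hW
  haveI : FiniteDimensional (RatFunc ℝ) W :=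
    FiniteDimensional.span_of_finite _ (Set.finite_range fam)
  have hind' : LinearIndependent (RatFunc ℝ) (fun i => (⟨v i, hmem i⟩ : W)) := by
    apply LinearIndependent.of_comp W.subtype
    convert hind
    rfl
  have hcard : Fintype.card (Fin k) ≤ Module.finrank (RatFunc ℝ) W :=
    hind'.fintype_card_le_finrank
  have hfr : Module.finrank (RatFunc ℝ) W ≤ k' := by
    refine le_trans (finrank_range_le_card fam) ?_
    simp
  rw [Fintype.card_fin] at hcard
  omega

lemma dMulP_coeff_bound {d : ℕ} (q : Polynomial (Polynomial ℝ))
    (hq : ∀ j, (q.coeff j).natDegree ≤ d) : ∀ j, ((dMulP q).coeff j).natDegree ≤ d := by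
  intro j
  rw [dMulP_def, coeff_add, coeff_PhiP]
  refine le_trans (natDegree_add_le _ _) (max_le ?_ ?_)
  · cases j with
    | zero => simp [mul_coeff_zero]
    | succ i => rw [coeff_X_mul]; exact hq i
  · exact le_trans (natDegree_derivative_le _) (le_trans (Nat.sub_le _ _) (hq j))

lemma dMulP_iter_coeff_bound {d : ℕ} (q : Polynomial (Polynomial ℝ))
    (hq : ∀ j, (q.coeff j).natDegree ≤ d) (i : ℕ) :
    ∀ j, ((dMulP^[i] q).coeff j).natDegree ≤ d := by
  induction i with
  | zero => exact hq
  | succ i ih => rw [Function.iterate_succ_apply']; exact dMulP_coeff_bound _ ih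


/-- If the GCRD is non-trivial there is a polynomial left null vector of V(f,g)
of degree in t at most 2(m+n)d. -/
theorem exists_poly_left_null_vector (f g : Polynomial (Polynomial ℝ)) (m n d : ℕ)
    (hfd : f.degree = (m : WithBot ℕ)) (hgd : g.degree = (n : WithBot ℕ))
    (hft : ∀ i, (f.coeff i).natDegree ≤ d) (hgt : ∀ i, (g.coeff i).natDegree ≤ d)
    (hG : ∃ h, IsGCRD (toRat f) (toRat g) h ∧ 1 ≤ h.degree) :
    ∃ w : Fin (m + n) → Polynomial ℝ, w ≠ 0 ∧
      Matrix.vecMul w (sylvP f g m n) = 0 ∧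
      ∀ i, (w i).natDegree ≤ 2 * (m + n) * d := by
  obtain ⟨h, ⟨hDf, hDg, _⟩, hh1⟩ := hG
  have hh0 : h ≠ 0 := by
    intro h0; rw [h0, degree_zero] at hh1; exact absurd hh1 (by simp)
  have hndh : 1 ≤ h.natDegree := by
    rw [degree_eq_natDegree hh0] at hh1
    exact_mod_cast hh1
  have hf0 : f ≠ 0 := by
    intro h0; rw [h0, degree_zero] at hfd; exact absurd hfd.symm (by simp)
  have hg0 : g ≠ 0 := by
    intro h0; rw [h0, degree_zero] at hgd; exact absurd hgd.symm (by simp)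
  have htf : toRat f ≠ 0 := by
    rw [toRat, Ne, Polynomial.map_eq_zero_iff phi_inj]; exact hf0
  have htg : toRat g ≠ 0 := by
    rw [toRat, Ne, Polynomial.map_eq_zero_iff phi_inj]; exact hg0
  have hdegf : (toRat f).degree = (m : WithBot ℕ) := by
    rw [toRat, degree_map_eq_of_injective phi_inj, hfd]
  have hdegg : (toRat g).degree = (n : WithBot ℕ) := by
    rw [toRat, degree_map_eq_of_injective phi_inj, hgd]
  rcases Nat.eq_zero_or_pos (m + n) with hk0 | hkpos
  · exfalso
    have hm : m = 0 := by omega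
    obtain ⟨u, hu⟩ := hDf
    have hu0 : u ≠ 0 := by
      intro h0; rw [h0, skewMul_zero_left] at hu; exact htf hu
    have hds := degree_skewMul u h hu0 hh0
    rw [← hu, hdegf, hm] at hds
    have : (0 : ℕ) = u.natDegree + h.natDegree := by exact_mod_cast hds
    omega
  · have hentry : ∀ i j, ((sylvP f g m n) i j).natDegree ≤ d := by
      intro i j
      rw [sylvP, Matrix.of_apply]
      by_cases hin : (i : ℕ) < n
      · rw [if_pos hin]; exact dMulP_iter_coeff_bound f hft _ _
      · rw [if_neg hin]; exact dMulP_iter_coeff_bound g hgt _ _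
    rcases dichotomy d (m + n) (sylvP f g m n) hentry with ⟨J, hJinj, hJdet⟩ | ⟨w, hw0, hwM, hwd⟩
    · exfalso
      set N : Matrix (Fin (m+n)) (Fin (m+n)) (RatFunc ℝ) := (sylvP f g m n).map φ with hN
      have hdet2 : (N.submatrix id J).det ≠ 0 := by
        intro h0
        apply hJdet
        apply phi_inj
        rw [RingHom.map_det, map_zero]
        convert h0 using 2
        ext i j; rfl
      have hind := rows_indep_of_det N J hdet2
      refine not_indep (fun i => N i)
        (fun j : Fin (m + n - 1) => CV (m+n) (dMul^[(j:ℕ)] h)) (by omega) ?_ hind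
      intro i
      have hrow : N i = CV (m+n)
          (if (i : ℕ) < n then dMul^[(i:ℕ)] (toRat f) else dMul^[(i:ℕ) - n] (toRat g)) := by
        funext j
        by_cases hin : (i : ℕ) < n
        · simp only [hN, Matrix.map_apply, sylvP, Matrix.of_apply, if_pos hin]
          rw [show φ ((dMulP^[(i:ℕ)] f).coeff j) = (toRat (dMulP^[(i:ℕ)] f)).coeff j from
            (coeff_toRat _ _).symm, toRat_dMulP_iter]
          rfl
        · simp only [hN, Matrix.map_apply, sylvP, Matrix.of_apply, if_neg hin]
          rw [show φ ((dMulP^[(i:ℕ)-n] g).coeff j) = (toRat (dMulP^[(i:ℕ)-n] g)).coeff j from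
            (coeff_toRat _ _).symm, toRat_dMulP_iter]
          rfl
      show N i ∈ _
      rw [hrow]
      by_cases hin : (i : ℕ) < n
      · rw [if_pos hin]
        refine row_mem_span h _ hh1 (rightDvd_dMul_iter hDf _) (dMul_iter_ne_zero _ htf _) ?_
        rw [(degree_dMul_iter (toRat f) htf (i:ℕ)).1, hdegf]
        have : m + (i:ℕ) < m + n := by omega
        exact_mod_cast this
      · rw [if_neg hin]
        refine row_mem_span h _ hh1 (rightDvd_dMul_iter hDg _) (dMul_iter_ne_zero _ htg _) ?_
        rw [(degree_dMul_iter (toRat g) htg _).1, hdegg]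
        have : n + ((i:ℕ) - n) < m + n := by
          have := i.isLt
          omega
        exact_mod_cast this
    · refine ⟨w, hw0, hwM, fun i => le_trans (hwd i) ?_⟩
      calc (m+n)*d ≤ 2*((m+n)*d) := Nat.le_mul_of_pos_left _ two_pos
        _ = 2*(m+n)*d := (mul_assoc 2 (m+n) d).symm
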